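/- Let N > 1 be a natural number. The number of integers m with 2 ≤ m ≤ N expressible as q^n + binom(n,d)_{q₁} + ω(d), where q₁ is a prime power, d, n are integers with n ≥ 3 and 1 ≤ d < n, and q = q₁^d, is less than 72·N/log₂(N). -/

import Mathlib

/-- The Gaussian (`q`-)binomial coefficient `binom(n,k)_q`, via the product formula. -/
noncomputable def gbinom (q n k : ℕ) : ℝ :=
  ∏ i ∈ Finset.range k, ((q : ℝ) ^ (n - i) - 1) / ((q : ℝ) ^ (k - i) - 1)

lemma gbinom_nonneg {q n k : ℕ} (hq : 2 ≤ q) : 0 ≤ gbinom q n k := by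
  apply Finset.prod_nonneg
  intro i _
  have hq1 : (1:ℝ) ≤ (q:ℝ) := by exact_mod_cast (by omega : 1 ≤ q)
  apply div_nonneg <;> · have := one_le_pow₀ hq1 (n := n - i); have := one_le_pow₀ hq1 (n := k - i); linarith

set_option maxHeartbeats 1600000 in
/-- For `N > 1`, the number of integers `2 ≤ m ≤ N` expressible as
`q^n + binom(n,d)_{q₁} + ω(d)` with `q₁` a prime power, `n ≥ 3`, `1 ≤ d < n`, and
`q = q₁^d`, is less than `72·N/log₂(N)`. -/
theorem stmt_18 (N : ℕ) (hN : 1 < N) :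
    ({m : ℕ | 2 ≤ m ∧ m ≤ N ∧ ∃ q₁ n d : ℕ, IsPrimePow q₁ ∧ 3 ≤ n ∧ 1 ≤ d ∧ d < n ∧
        (m : ℝ) = ((q₁ : ℝ) ^ d) ^ n + gbinom q₁ n d + d.primeFactors.card}.ncard : ℝ) <
      72 * N / Real.logb 2 N := by
  classical
  have hN2 : (2:ℝ) ≤ (N:ℝ) := by exact_mod_cast hN
  set K := Nat.log 2 N with hK
  set M := Nat.findGreatest (fun m => m ^ 3 ≤ N) N with hMdef
  set F : ℕ × ℕ × ℕ → ℝ := fun p =>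
    ((p.1 : ℝ) ^ p.2.2) ^ p.2.1 + gbinom p.1 p.2.1 p.2.2 + (p.2.2.primeFactors.card : ℝ) with hF
  set T : Finset (ℕ × ℕ × ℕ) := Finset.Icc 2 M ×ˢ Finset.Icc 3 K ×ˢ Finset.Icc 1 K with hT
  set S := {m : ℕ | 2 ≤ m ∧ m ≤ N ∧ ∃ q₁ n d : ℕ, IsPrimePow q₁ ∧ 3 ≤ n ∧ 1 ≤ d ∧ d < n ∧
        (m : ℝ) = ((q₁ : ℝ) ^ d) ^ n + gbinom q₁ n d + d.primeFactors.card} with hS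
  have hsub : ((Nat.cast : ℕ → ℝ) '' S) ⊆ F '' ↑T := by
    rintro x ⟨m, hm, rfl⟩
    obtain ⟨hm2, hmN, q₁, n, d, hpp, hn3, hd1, hdn, hmeq⟩ := hm
    have hq2 : 2 ≤ q₁ := hpp.two_le
    have hg : 0 ≤ gbinom q₁ n d := gbinom_nonneg hq2
    have hw : (0:ℝ) ≤ (d.primeFactors.card : ℝ) := by positivity
    have hmN' : (m:ℝ) ≤ (N:ℝ) := by exact_mod_cast hmN
    have hA : ((q₁:ℝ) ^ d) ^ n ≤ (N:ℝ) := by nlinarith [hmeq]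
    have hpow : (q₁:ℝ) ^ (d * n) ≤ (N:ℝ) := by rw [pow_mul]; exact hA
    have hpowN : q₁ ^ (d * n) ≤ N := by exact_mod_cast hpow
    have hdn3 : 3 ≤ d * n := le_trans hn3 (Nat.le_mul_of_pos_left n (by omega))
    have hq3 : q₁ ^ 3 ≤ N := le_trans (Nat.pow_le_pow_right (by omega) hdn3) hpowN
    have h2n : 2 ^ n ≤ N :=
      le_trans (le_trans (Nat.pow_le_pow_left hq2 n)
        (Nat.pow_le_pow_right (by omega) (Nat.le_mul_of_pos_left n (by omega)))) hpowN
    have hnK : n ≤ K := (Nat.le_log_iff_pow_le (by norm_num) (by omega)).mpr h2n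
    have hdK : d ≤ K := le_trans hdn.le hnK
    have hq₁N : q₁ ≤ N := le_trans (Nat.le_self_pow (by norm_num) q₁) hq3
    have hqM : q₁ ≤ M := Nat.le_findGreatest hq₁N hq3
    refine ⟨(q₁, n, d), ?_, ?_⟩
    · simp only [hT, Finset.coe_product, Set.mem_prod, Finset.mem_coe, Finset.mem_Icc]
      exact ⟨⟨hq2, hqM⟩, ⟨hn3, hnK⟩, ⟨hd1, hdK⟩⟩
    · exact hmeq.symm
  have h1 : S.ncard ≤ T.card := by
    have h2 := Set.ncard_le_ncard hsub (T.finite_toSet.image F)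
    rw [Set.ncard_image_of_injective S Nat.cast_injective] at h2
    refine h2.trans ?_
    calc (F '' ↑T).ncard ≤ (↑T : Set (ℕ × ℕ × ℕ)).ncard := Set.ncard_image_le T.finite_toSet
      _ = T.card := Set.ncard_coe_finset T
  have hTcard : T.card ≤ M * (K * K) := by
    rw [hT, Finset.card_product, Finset.card_product]
    simp only [Nat.card_Icc]
    exact Nat.mul_le_mul (by omega) (Nat.mul_le_mul (by omega) (by omega))
  have hM3 : (M:ℝ) ^ 3 ≤ (N:ℝ) := by
    have h3 : M ^ 3 ≤ N := Nat.findGreatest_spec (P := fun m => m ^ 3 ≤ N) (m := 1) (by omega) (by simpa using hN.le)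
    exact_mod_cast h3
  set L := Real.logb 2 N with hL
  have hKpow : (2:ℕ) ^ K ≤ N := Nat.pow_log_le_self 2 (by omega)
  have hKL : (K:ℝ) ≤ L := by
    have h4 : Real.logb 2 ((2:ℝ) ^ K) ≤ L := by
      rw [hL]
      apply (Real.logb_le_logb (by norm_num) (by positivity) (by positivity)).mpr
      exact_mod_cast hKpow
    rwa [Real.logb_pow, Real.logb_self_eq_one (by norm_num), mul_one] at h4
  have hK1 : 1 ≤ K := (Nat.le_log_iff_pow_le (by norm_num) (by omega)).mpr (by simp only [pow_one]; omega)
  have hL1 : (1:ℝ) ≤ L := le_trans (by exact_mod_cast hK1) hKL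
  have hLpos : (0:ℝ) < L := by linarith
  -- the key analytic inequality : M * L^3 < 72 * N
  have hkey : (M:ℝ) * L ^ 3 < 72 * N := by
    set y : ℝ := 2 * Real.log N with hy
    have hy0 : 0 ≤ y := by
      have := Real.log_nonneg (by linarith : (1:ℝ) ≤ N)
      linarith
    have hterm : y ^ 9 / 362880 ≤ Real.exp y := by
      have hsum := Real.sum_le_exp_of_nonneg hy0 10
      have hsingle : y ^ 9 / (Nat.factorial 9 : ℝ) ≤
          ∑ i ∈ Finset.range 10, y ^ i / (Nat.factorial i : ℝ) := by
        apply Finset.single_le_sum (f := fun i => y ^ i / (Nat.factorial i : ℝ))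
        · intro i _; positivity
        · simp
      simp only [Nat.factorial] at hsingle
      norm_num [Nat.factorial] at hsingle
      linarith
    have hexpy : Real.exp y = (N:ℝ) ^ 2 := by
      rw [hy, show 2 * Real.log N = Real.log ((N:ℝ) ^ 2) by rw [Real.log_pow]; norm_num,
        Real.exp_log (by positivity)]
    have hy9 : y ^ 9 ≤ 362880 * (N:ℝ) ^ 2 := by
      rw [hexpy] at hterm; linarith
    -- y = (2 log 2) * L
    have hyL : y = (2 * Real.log 2) * L := by
      rw [hy, hL, Real.logb]
      have h2 : Real.log 2 ≠ 0 := by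
        have := Real.log_two_gt_d9; linarith
      field_simp
    have hc : (1.386:ℝ) < 2 * Real.log 2 := by
      have := Real.log_two_gt_d9; linarith
    have hc9 : (18:ℝ) ≤ (2 * Real.log 2) ^ 9 := by
      calc (18:ℝ) ≤ (1.386:ℝ) ^ 9 := by norm_num
        _ ≤ (2 * Real.log 2) ^ 9 := by
            apply pow_le_pow_left₀ (by norm_num) hc.le
    have hL9 : L ^ 9 * 18 ≤ 362880 * (N:ℝ) ^ 2 := by
      have h5 : ((2 * Real.log 2) * L) ^ 9 ≤ 362880 * (N:ℝ) ^ 2 := by rw [← hyL]; exact hy9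
      rw [mul_pow] at h5
      have hL9nn : 0 ≤ L ^ 9 := by positivity
      nlinarith [hL9nn]
    have hcube : ((M:ℝ) * L ^ 3) ^ 3 < (72 * N) ^ 3 := by
      have hL9nn : 0 ≤ L ^ 9 := by positivity
      have hM0 : (0:ℝ) ≤ M := by exact_mod_cast Nat.zero_le M
      calc ((M:ℝ) * L ^ 3) ^ 3 = (M:ℝ) ^ 3 * L ^ 9 := by ring
        _ ≤ (N:ℝ) * L ^ 9 := by nlinarith [hL9nn]
        _ ≤ (N:ℝ) * (20160 * (N:ℝ) ^ 2) := by nlinarith [hL9]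
        _ < (72 * N) ^ 3 := by nlinarith [hN2]
    exact lt_of_pow_lt_pow_left₀ 3 (by positivity) hcube
  rw [lt_div_iff₀ hLpos]
  have hcard : (S.ncard : ℝ) ≤ (M:ℝ) * ((K:ℝ) * K) := by
    have := h1.trans hTcard
    exact_mod_cast this
  have hK0 : (0:ℝ) ≤ (K:ℝ) := by positivity
  have hM0 : (0:ℝ) ≤ (M:ℝ) := by positivity
  calc (S.ncard : ℝ) * L ≤ ((M:ℝ) * ((K:ℝ) * K)) * L := by
        apply mul_le_mul_of_nonneg_right hcard hLpos.le
    _ ≤ ((M:ℝ) * (L * L)) * L := by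
        apply mul_le_mul_of_nonneg_right
        apply mul_le_mul_of_nonneg_left _ hM0
        nlinarith [hKL, hK0, hL1]
        exact hLpos.le
    _ = (M:ℝ) * L ^ 3 := by ring
    _ < 72 * N := hkey
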